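/- Let V be a finite-dimensional vector space over a field K, let l ≥ 1 be an integer, and let A, h : V → V be linear endomorphisms. Let T : V^{⊗l} → V^{⊗l} be the unique linear endomorphism of the l-th tensor power satisfying T(v₁ ⊗ v₂ ⊗ ⋯ ⊗ v_l) = (A∘h)(v_l) ⊗ h(v₁) ⊗ ⋯ ⊗ h(v_{l−1}) for all v₁, …, v_l ∈ V. Then trace(T) = trace(A ∘ h^l). -/

import Mathlib

open scoped TensorProduct
open PiTensorProduct


set_option linter.unusedSectionVars false
set_option maxHeartbeats 1000000

section Aux

variable {K V ι : Type*} [Field K] [AddCommGroup V] [Module K V]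
  [Fintype ι] [DecidableEq ι] (l : ℕ) (b : Module.Basis ι K V)

private noncomputable def Fwd' : (⨂[K]^l V) →ₗ[K] ((Fin l → ι) →₀ K) :=
  PiTensorProduct.lift (∑ f : Fin l → ι,
    (Finsupp.lsingle f).compMultilinearMap
      ((MultilinearMap.mkPiAlgebra K (Fin l) K).compLinearMap
        (fun i => Finsupp.lapply (f i) ∘ₗ (b.repr : V →ₗ[K] ι →₀ K))))

private lemma Fwd'_tprod (v : Fin l → V) :
    Fwd' l b (PiTensorProduct.tprod K v) = ∑ f : Fin l → ι, (∏ i, b.repr (v i) (f i)) • Finsupp.single f 1 := by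
  simp [Fwd', Finsupp.smul_single]

private noncomputable def Bwd' : ((Fin l → ι) →₀ K) →ₗ[K] (⨂[K]^l V) :=
  Finsupp.lift _ _ _ (fun f => PiTensorProduct.tprod K (b ∘ f))

private lemma Bwd'_single (f : Fin l → ι) :
    Bwd' l b (Finsupp.single f 1) = PiTensorProduct.tprod K (b ∘ f) := by
  simp [Bwd']

private lemma tprod_expand' (v : Fin l → V) :
    (PiTensorProduct.tprod K v : ⨂[K]^l V) = ∑ f : Fin l → ι, (∏ i, b.repr (v i) (f i)) • PiTensorProduct.tprod K (b ∘ f) := by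
  have hv : ∀ i, v i = ∑ j : ι, b.repr (v i) j • b j := fun i => by
    rw [← Module.Basis.sum_equivFun b (v i)]; simp [Module.Basis.equivFun_apply]
  conv_lhs => rw [show v = fun i => ∑ j : ι, b.repr (v i) j • b j from funext hv]
  rw [MultilinearMap.map_sum (PiTensorProduct.tprod K) (fun i j => b.repr (v i) j • b j)]
  refine Finset.sum_congr rfl fun f _ => ?_
  rw [MultilinearMap.map_smul_univ]
  rfl

private lemma bwd_fwd' : (Bwd' l b) ∘ₗ (Fwd' l b) = LinearMap.id := by
  ext v
  simp only [LinearMap.comp_apply, LinearMap.compMultilinearMap_apply, LinearMap.id_apply]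
  rw [Fwd'_tprod, map_sum]
  simp only [map_smul, Bwd'_single]
  exact (tprod_expand' l b v).symm

private lemma fwd_bwd' : (Fwd' l b) ∘ₗ (Bwd' l b) = LinearMap.id := by
  ext f
  simp only [LinearMap.comp_apply, LinearMap.id_apply, Finsupp.lsingle_apply]
  rw [Bwd'_single, Fwd'_tprod]
  have : ∀ g : Fin l → ι, (∏ i, b.repr ((b ∘ f) i) (g i)) = if g = f then (1:K) else 0 := by
    intro g
    simp only [Function.comp_apply, Module.Basis.repr_self]
    by_cases hfg : g = f
    · subst hfg; simp
    · obtain ⟨i, hi⟩ := Function.ne_iff.mp hfg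
      rw [if_neg hfg]
      apply Finset.prod_eq_zero (Finset.mem_univ i)
      simp [Finsupp.single_apply, Ne.symm hi]
  simp only [this]
  rw [Finset.sum_eq_single f]
  · simp
  · intro g _ hg; rw [if_neg hg, zero_smul]
  · intro hf; exact absurd (Finset.mem_univ f) hf

private noncomputable def tpBasis' : Module.Basis (Fin l → ι) K (⨂[K]^l V) :=
  Module.Basis.ofRepr (LinearEquiv.ofLinear (Fwd' l b) (Bwd' l b) (fwd_bwd' l b) (bwd_fwd' l b))

private lemma tpBasis'_apply (f : Fin l → ι) : tpBasis' l b f = PiTensorProduct.tprod K (b ∘ f) := by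
  simp only [tpBasis', Module.Basis.coe_ofRepr, LinearEquiv.ofLinear_symm_apply]
  exact Bwd'_single l b f

private lemma tpBasis'_repr_tprod (v : Fin l → V) (f : Fin l → ι) :
    (tpBasis' l b).repr (PiTensorProduct.tprod K v) f = ∏ i, b.repr (v i) (f i) := by
  have : (tpBasis' l b).repr (PiTensorProduct.tprod K v) = Fwd' l b (PiTensorProduct.tprod K v) := rfl
  rw [this, Fwd'_tprod]
  rw [Finsupp.finset_sum_apply]
  simp [Finsupp.smul_single, Finsupp.single_apply]

private lemma fin_zero_sub_one' (n : ℕ) : (0 : Fin (n+1)) - 1 = Fin.last n := by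
  ext; simp [Fin.coe_sub_one]

private lemma fin_succ_sub_one' {n : ℕ} (i : Fin n) :
    (i.succ : Fin (n+1)) - 1 = i.castSucc := by
  ext; rw [Fin.coe_sub_one, if_neg (Fin.succ_ne_zero i)]; simp

private lemma path_sum' {R : Type*} [CommRing R] (n : ℕ) (C H : Matrix ι ι R) :
    ∑ f : Fin (n+1) → ι, ∏ i : Fin (n+1), (if i = 0 then C else H) (f i) (f (i - 1))
      = Matrix.trace (C * H ^ n) := by
  induction n generalizing C with
  | zero =>
    rw [pow_zero, mul_one, Matrix.trace]
    rw [← (Equiv.funUnique (Fin 1) ι).symm.sum_comp]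
    simp [Matrix.diag, Equiv.funUnique]
  | succ n IH =>
    rw [pow_succ', ← mul_assoc, ← IH (C * H)]
    rw [← (Fin.snocEquiv (fun _ : Fin (n+2) => ι)).sum_comp]
    rw [Fintype.sum_prod_type]
    simp only [Fin.snocEquiv, Equiv.coe_fn_mk]
    refine Finset.sum_comm.trans (Finset.sum_congr rfl fun g _ => ?_)
    have key : ∀ x : ι,
        (∏ i : Fin (n+2), (if i = 0 then C else H)
            ((Fin.snoc g x : Fin (n+2) → ι) i) ((Fin.snoc g x : Fin (n+2) → ι) (i - 1)))
          = (C (g 0) x * H x (g (Fin.last n))) *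
            ∏ i : Fin n, H (g i.succ) (g (i.succ - 1)) := by
      intro x
      have h1 : (Fin.last (n+1) : Fin (n+2)) ≠ 0 := by simp [Fin.ext_iff]
      have h2 : (Fin.last (n+1) : Fin (n+2)) - 1 = Fin.castSucc (Fin.last n) := by
        ext; rw [Fin.coe_sub_one, if_neg h1]; simp
      have hlast : (if (Fin.last (n+1) : Fin (n+2)) = 0 then C else H)
          ((Fin.snoc g x : Fin (n+2) → ι) (Fin.last (n+1)))
          ((Fin.snoc g x : Fin (n+2) → ι) (Fin.last (n+1) - 1)) = H x (g (Fin.last n)) := by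
        rw [if_neg h1, h2, Fin.snoc_last, Fin.snoc_castSucc]
      have hzero : (if (Fin.castSucc (0 : Fin (n+1)) : Fin (n+2)) = 0 then C else H)
          ((Fin.snoc g x : Fin (n+2) → ι) (Fin.castSucc 0))
          ((Fin.snoc g x : Fin (n+2) → ι) (Fin.castSucc 0 - 1)) = C (g 0) x := by
        rw [Fin.castSucc_zero, if_pos rfl, fin_zero_sub_one', Fin.snoc_last,
          show (0 : Fin (n+2)) = Fin.castSucc 0 from rfl, Fin.snoc_castSucc]
      have hsucc : ∀ i : Fin n, (if (Fin.castSucc i.succ : Fin (n+2)) = 0 then C else H)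
          ((Fin.snoc g x : Fin (n+2) → ι) (Fin.castSucc i.succ))
          ((Fin.snoc g x : Fin (n+2) → ι) (Fin.castSucc i.succ - 1))
          = H (g i.succ) (g (i.succ - 1)) := by
        intro i
        have h5 : (Fin.castSucc i.succ : Fin (n+2)) ≠ 0 := by simp [Fin.ext_iff]
        have h4 : (Fin.castSucc i.succ : Fin (n+2)) - 1 = Fin.castSucc (i.succ - 1) := by
          ext
          rw [Fin.coe_sub_one, if_neg h5]
          simp [fin_succ_sub_one' i, Fin.coe_sub_one, Fin.succ_ne_zero i]
        rw [if_neg h5, h4, Fin.snoc_castSucc, Fin.snoc_castSucc]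
      rw [Fin.prod_univ_castSucc, hlast, Fin.prod_univ_succ, hzero]
      rw [Finset.prod_congr rfl (fun i _ => hsucc i)]
      ring
    simp only [key]
    rw [← Finset.sum_mul, Fin.prod_univ_succ, if_pos rfl, fin_zero_sub_one', Matrix.mul_apply]
    congr 1

end Aux


/-- Let `V` be a finite-dimensional vector space over a field `K`, `l ≥ 1`, and `A, h`
endomorphisms of `V`. If `T` is the endomorphism of the `l`-th tensor power `V^{⊗l}` with
`T(v₁ ⊗ ⋯ ⊗ v_l) = (A∘h)(v_l) ⊗ h(v₁) ⊗ ⋯ ⊗ h(v_{l−1})` (cyclic permutation of factors, with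
`h` applied to each factor and `A` applied to the wrapped-around factor), then
`trace T = trace (A ∘ h^l)`. -/
theorem trace_cyclic_tensorPower (K V : Type*) [Field K] [AddCommGroup V] [Module K V]
    [FiniteDimensional K V] (l : ℕ) [NeZero l] (A h : V →ₗ[K] V)
    (T : (⨂[K]^l V) →ₗ[K] (⨂[K]^l V))
    (hT : ∀ v : Fin l → V,
      T (PiTensorProduct.tprod K v) =
        PiTensorProduct.tprod K (fun i => if i = 0 then A (h (v (i - 1))) else h (v (i - 1)))) :
    LinearMap.trace K (⨂[K]^l V) T = LinearMap.trace K V (A ∘ₗ (h ^ l)) := by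
  classical
  obtain ⟨m, rfl⟩ : ∃ m, l = m + 1 :=
    ⟨l - 1, (Nat.succ_pred_eq_of_ne_zero (NeZero.ne l)).symm⟩
  set b := Module.finBasis K V with hb
  set B := tpBasis' (m+1) b with hB
  rw [LinearMap.trace_eq_matrix_trace K B T,
    LinearMap.trace_eq_matrix_trace K b (A ∘ₗ (h ^ (m+1)))]
  set Ch := LinearMap.toMatrix b b (A ∘ₗ h) with hCh
  set H := LinearMap.toMatrix b b h with hH
  have step1 : Matrix.trace (LinearMap.toMatrix B B T)
      = ∑ f : Fin (m+1) → Fin (Module.finrank K V),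
          ∏ i : Fin (m+1), (if i = 0 then Ch else H) (f i) (f (i - 1)) := by
    rw [Matrix.trace]
    refine Finset.sum_congr rfl fun f _ => ?_
    rw [Matrix.diag_apply, LinearMap.toMatrix_apply, hB, tpBasis'_apply, hT]
    rw [tpBasis'_repr_tprod]
    refine Finset.prod_congr rfl fun i _ => ?_
    by_cases hi : i = 0
    · rw [if_pos hi, if_pos hi, hCh, LinearMap.toMatrix_apply]
      rfl
    · rw [if_neg hi, if_neg hi, hH, LinearMap.toMatrix_apply]
      rfl
  rw [step1, path_sum' m Ch H]
  congr 1
  have hA : A ∘ₗ h ^ (m+1) = (A ∘ₗ h) ∘ₗ h ^ m := by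
    rw [pow_succ' h m, Module.End.mul_eq_comp, LinearMap.comp_assoc]
  rw [hA, LinearMap.toMatrix_comp b b b, LinearMap.toMatrix_pow]
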